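/- The maximum of |μ(1-k)k - (1-μ)(1-l)l| over all μ, k, l ∈ [0,1] subject to μk ≤ (1-μ)l, μ(1-k) ≥ (1-μ)(1-l), and k ≤ l, equals 3 - 2√2, attained at μ = √2/2, k = √2 - 1, l = 1. -/

import Mathlib

lemma key_bound (s μ k l : ℝ) (hs : s^2 = 2) (hs1 : 1 ≤ s)
    (hμ : 0 ≤ μ) (hμ1 : μ ≤ 1) (hk : 0 ≤ k) (hk1 : k ≤ 1)
    (hl : 0 ≤ l) (hl1 : l ≤ 1)
    (h1 : μ*k ≤ (1-μ)*l) (h2 : (1-μ)*(1-l) ≤ μ*(1-k)) (hkl : k ≤ l) :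
    μ*(1-k)*k - (1-μ)*(1-l)*l ≤ 3 - 2*s := by
  have h3 : 0 ≤ 3 - 2*s := by nlinarith [sq_nonneg (2*s - 3)]
  rcases le_or_gt (k + l) 0 with h | h
  · have hk0 : k = 0 := le_antisymm (by linarith) hk
    have hl0 : l = 0 := le_antisymm (by linarith) hl
    subst hk0; subst hl0
    nlinarith
  · have hT1a : 0 ≤ l - μ*k - μ*l := by nlinarith
    have hT1b : 0 ≤ k*(1-k) + l*(1-l) :=
      add_nonneg (mul_nonneg hk (by linarith)) (mul_nonneg hl (by linarith))
    have key2 : (μ*(1-k)*k - (1-μ)*(1-l)*l) * (k+l) ≤ (3 - 2*s) * (k+l) := by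
      nlinarith [mul_nonneg hT1a hT1b, mul_nonneg hl (sq_nonneg (k - (s-1))),
        mul_nonneg (mul_nonneg hk hl) (sub_nonneg.2 hl1),
        mul_nonneg (mul_nonneg h3 hk) (sub_nonneg.2 hl1)]
    exact (mul_le_mul_iff_of_pos_right h).mp key2

theorem stmt3 :
    IsGreatest {x : ℝ | ∃ μ k l : ℝ, μ ∈ Set.Icc (0:ℝ) 1 ∧ k ∈ Set.Icc (0:ℝ) 1 ∧
      l ∈ Set.Icc (0:ℝ) 1 ∧ μ * k ≤ (1 - μ) * l ∧ (1 - μ) * (1 - l) ≤ μ * (1 - k) ∧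
      k ≤ l ∧ x = |μ * (1 - k) * k - (1 - μ) * (1 - l) * l|} (3 - 2 * Real.sqrt 2) ∧
    |Real.sqrt 2 / 2 * (1 - (Real.sqrt 2 - 1)) * (Real.sqrt 2 - 1)
        - (1 - Real.sqrt 2 / 2) * (1 - 1) * 1| = 3 - 2 * Real.sqrt 2 := by
  set s := Real.sqrt 2 with hs_def
  have hs : s^2 = 2 := Real.sq_sqrt (by norm_num)
  have hs0 : 0 ≤ s := Real.sqrt_nonneg 2
  have hs1 : 1 ≤ s := by nlinarith
  have hs2 : s ≤ 2 := by nlinarith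
  have h3 : 0 ≤ 3 - 2*s := by nlinarith [sq_nonneg (2*s - 3)]
  have heq : |s / 2 * (1 - (s - 1)) * (s - 1) - (1 - s / 2) * (1 - 1) * 1| = 3 - 2 * s := by
    rw [abs_of_nonneg (by nlinarith)]
    linear_combination (3/2 - s/2) * hs
  refine ⟨⟨⟨s/2, s-1, 1, ⟨by linarith, by linarith⟩, ⟨by linarith, by linarith⟩,
      ⟨by norm_num, le_refl 1⟩, ?_, ?_, by linarith, heq.symm⟩, ?_⟩, heq⟩
  · exact le_of_eq (by linear_combination hs/2)
  · nlinarith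
  · rintro x ⟨μ, k, l, ⟨hμ, hμ1⟩, ⟨hk, hk1⟩, ⟨hl, hl1⟩, h1, h2, hkl, rfl⟩
    rw [abs_le]
    constructor
    · have := key_bound s (1-μ) (1-l) (1-k) hs hs1 (by linarith) (by linarith)
        (by linarith) (by linarith) (by linarith) (by linarith)
        (by nlinarith) (by nlinarith) (by linarith)
      nlinarith [this]
    · exact key_bound s μ k l hs hs1 hμ hμ1 hk hk1 hl hl1 h1 h2 hkl
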